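/- Let λ₂ > 0 and ε₀ > 0, let r₀ satisfy 0 < |r₀ − 2| ≤ ε₀, and set a = |r₀ − 2|. Assume g(r₀, z) ≥ 0 for all z, and g(r₀, z) ≤ λ₂·(a² + (z+1)²) for all z with |z+1| ≤ ε₀. If z : [0,T] → ℝ is differentiable with z′(t) = g(r₀, z(t)) for all t ∈ [0,T], z(0) = −1−ε₀ and z(T) = −1+ε₀, then T ≥ (2/(λ₂·a))·arctan(ε₀/a). In particular, under the quadratic upper bound of Hypothesis 4.2 with n = 2, the time a Wilson orbit at radius r₀ needs to climb past the level z = −1 is bounded below by a quantity tending to infinity as r₀ → 2. -/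

import Mathlib

open Set Real

/-- Lower bound on the climbing time past the level `z = -1` at radius `r₀` near `2`,
under the quadratic upper bound of Hypothesis 4.2 with `n = 2`: if `g(r₀,·) ≥ 0`,
`g(r₀,z) ≤ λ₂(a² + (z+1)²)` for `|z+1| ≤ ε₀`, where `a = |r₀ - 2|` with
`0 < a ≤ ε₀`, and `z' = g(r₀, z)` on `[0,T]` with `z(0) = -1-ε₀` and `z(T) = -1+ε₀`,
then `T ≥ (2/(λ₂·a))·arctan(ε₀/a)`, a bound tending to infinity as `r₀ → 2`. -/
theorem climbing_time_lower_bound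
    (g : ℝ × ℝ → ℝ) (lam₂ ε₀ r₀ a : ℝ)
    (hlam : 0 < lam₂) (hε : 0 < ε₀)
    (ha : a = |r₀ - 2|) (ha0 : 0 < a) (haε : a ≤ ε₀)
    (hg0 : ∀ w : ℝ, 0 ≤ g (r₀, w))
    (hgb : ∀ w : ℝ, |w + 1| ≤ ε₀ → g (r₀, w) ≤ lam₂ * (a ^ 2 + (w + 1) ^ 2))
    (T : ℝ) (hT : 0 ≤ T) (z : ℝ → ℝ)
    (hode : ∀ t ∈ Icc (0 : ℝ) T, HasDerivAt z (g (r₀, z t)) t)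
    (hz0 : z 0 = -1 - ε₀) (hzT : z T = -1 + ε₀) :
    (2 / (lam₂ * a)) * arctan (ε₀ / a) ≤ T := by
  have h0T : (0 : ℝ) ∈ Icc (0 : ℝ) T := ⟨le_refl _, hT⟩
  have hTT : T ∈ Icc (0 : ℝ) T := ⟨hT, le_refl _⟩
  have hcont : ContinuousOn z (Icc 0 T) :=
    fun t ht => (hode t ht).continuousAt.continuousWithinAt
  -- z is monotone on [0,T]
  have hmono : MonotoneOn z (Icc 0 T) := by
    apply monotoneOn_of_hasDerivWithinAt_nonneg (convex_Icc 0 T) hcont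
      (f' := fun t => g (r₀, z t))
    · intro x hx
      exact ((hode x (interior_subset hx)).hasDerivWithinAt)
    · intro x _
      exact hg0 _
  -- hence z stays in the band |z+1| ≤ ε₀
  have hband : ∀ t ∈ Icc (0 : ℝ) T, |z t + 1| ≤ ε₀ := by
    intro t ht
    have h1 : z 0 ≤ z t := hmono h0T ht ht.1
    have h2 : z t ≤ z T := hmono ht hTT ht.2
    rw [abs_le]
    constructor <;> [linarith [hz0 ▸ h1]; linarith [hzT ▸ h2]]
  -- auxiliary function ψ(t) = λ₂ a t - arctan((z t + 1)/a)
  set ψ : ℝ → ℝ := fun t => lam₂ * a * t - arctan ((z t + 1) / a) with hψdef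
  have hψderiv : ∀ t ∈ Icc (0 : ℝ) T,
      HasDerivAt ψ (lam₂ * a - (1 / (1 + ((z t + 1) / a) ^ 2)) * (g (r₀, z t) / a)) t := by
    intro t ht
    have hu : HasDerivAt (fun s => (z s + 1) / a) (g (r₀, z t) / a) t :=
      ((hode t ht).add_const 1).div_const a
    have harc : HasDerivAt (fun s => arctan ((z s + 1) / a))
        ((1 / (1 + ((z t + 1) / a) ^ 2)) * (g (r₀, z t) / a)) t :=
      hu.arctan
    exact (((hasDerivAt_id t).const_mul (lam₂ * a)).sub harc).congr_deriv (by ring)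
  have hψnonneg : ∀ t ∈ Icc (0 : ℝ) T,
      0 ≤ lam₂ * a - (1 / (1 + ((z t + 1) / a) ^ 2)) * (g (r₀, z t) / a) := by
    intro t ht
    have hD : (0 : ℝ) < 1 + ((z t + 1) / a) ^ 2 := by positivity
    have hkey : g (r₀, z t) ≤ lam₂ * (a ^ 2 + (z t + 1) ^ 2) := hgb _ (hband t ht)
    have hsq : a ^ 2 * (1 + ((z t + 1) / a) ^ 2) = a ^ 2 + (z t + 1) ^ 2 := by
      field_simp
    rw [sub_nonneg, one_div, inv_mul_le_iff₀ hD]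
    rw [div_le_iff₀ ha0]
    calc g (r₀, z t) ≤ lam₂ * (a ^ 2 + (z t + 1) ^ 2) := hgb _ (hband t ht)
      _ = (1 + ((z t + 1) / a) ^ 2) * (lam₂ * a) * a := by rw [← hsq]; ring
  have hψmono : MonotoneOn ψ (Icc 0 T) := by
    apply monotoneOn_of_hasDerivWithinAt_nonneg (convex_Icc 0 T)
      (fun t ht => (hψderiv t ht).continuousAt.continuousWithinAt)
      (f' := fun t => lam₂ * a - (1 / (1 + ((z t + 1) / a) ^ 2)) * (g (r₀, z t) / a))
    · intro x hx
      exact (hψderiv x (interior_subset hx)).hasDerivWithinAt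
    · intro x hx
      exact hψnonneg x (interior_subset hx)
  have hle : ψ 0 ≤ ψ T := hψmono h0T hTT hT
  have hψ0 : ψ 0 = arctan (ε₀ / a) := by
    simp only [hψdef, hz0, mul_zero, zero_sub]
    rw [show (-1 - ε₀ + 1 : ℝ) = -ε₀ by ring, neg_div, Real.arctan_neg, neg_neg]
  have hψT : ψ T = lam₂ * a * T - arctan (ε₀ / a) := by
    simp only [hψdef, hzT]
    rw [show (-1 + ε₀ + 1 : ℝ) = ε₀ by ring]
  rw [hψ0, hψT] at hle
  have hpos : 0 < lam₂ * a := by positivity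
  rw [div_mul_eq_mul_div, div_le_iff₀ hpos]
  linarith
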